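/- For all nonzero complex numbers a, b such that a² ≠ 1, b² ≠ 1, b⁴ ≠ 1, a² ≠ b², a²b² ≠ 1, ab² ≠ −a^{-1} (i.e. all denominators below are nonzero), the following identity holds: (1/2) · Σ_{s,t ∈ {+1,−1}} s·t·a^{−s}·b^{t} / (1 + a^{−2s} b^{2t}) = (a − a^{−1})(b² − b^{−2}) / [ (a b^{−1} + a^{−1} b)(b + b^{−1})(a b + a^{−1} b^{−1}) ]. -/

import Mathlib

set_option maxHeartbeats 1000000

/-- The Kac–Wakimoto denominator identity for the trivial module over `osp(3|2)` with
respect to the Borel subalgebra `b^odd`, with `x = e^ε = a²`, `y = e^δ = b²`. -/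
theorem stmt_10 (a b : ℂ) (ha : a ≠ 0) (hb : b ≠ 0)
    (h1 : a ^ 2 ≠ 1) (h2 : b ^ 2 ≠ 1) (h3 : b ^ 4 ≠ 1) (h4 : a ^ 2 ≠ b ^ 2)
    (h5 : a ^ 2 * b ^ 2 ≠ 1) (h6 : a * b ^ 2 ≠ -a⁻¹)
    (hden : ∀ s ∈ ({1, -1} : Finset ℤ), ∀ t ∈ ({1, -1} : Finset ℤ),
      1 + a ^ (-2 * s) * b ^ (2 * t) ≠ 0)
    (hd1 : a * b⁻¹ + a⁻¹ * b ≠ 0) (hd2 : b + b⁻¹ ≠ 0) (hd3 : a * b + a⁻¹ * b⁻¹ ≠ 0) :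
    (1 / 2 : ℂ) * ∑ s ∈ ({1, -1} : Finset ℤ), ∑ t ∈ ({1, -1} : Finset ℤ),
        (s : ℂ) * (t : ℂ) * a ^ (-s) * b ^ t / (1 + a ^ (-2 * s) * b ^ (2 * t))
      = (a - a⁻¹) * (b ^ 2 - (b⁻¹) ^ 2) /
          ((a * b⁻¹ + a⁻¹ * b) * (b + b⁻¹) * (a * b + a⁻¹ * b⁻¹)) := by
  have e1 : (1 : ℤ) ∈ ({1, -1} : Finset ℤ) := by decide
  have e2 : (-1 : ℤ) ∈ ({1, -1} : Finset ℤ) := by decide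
  have k1 := hden 1 e1 1 e1
  have k2 := hden 1 e1 (-1) e2
  have k3 := hden (-1) e2 1 e1
  have k4 := hden (-1) e2 (-1) e2
  norm_num at k1 k2 k3 k4 ⊢
  have ha2 : (a : ℂ) ^ (2:ℕ) ≠ 0 := pow_ne_zero 2 ha
  have hb2 : (b : ℂ) ^ (2:ℕ) ≠ 0 := pow_ne_zero 2 hb
  have r1 : 1 + (a ^ (2:ℕ))⁻¹ * b ^ (2:ℕ) = (a ^ (2:ℕ) + b ^ (2:ℕ)) / a ^ (2:ℕ) := by
    field_simp
  have r2 : 1 + (a ^ (2:ℕ))⁻¹ * (b ^ (2:ℕ))⁻¹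
      = (a ^ (2:ℕ) * b ^ (2:ℕ) + 1) / (a ^ (2:ℕ) * b ^ (2:ℕ)) := by field_simp
  have r4 : 1 + a ^ (2:ℕ) * (b ^ (2:ℕ))⁻¹ = (b ^ (2:ℕ) + a ^ (2:ℕ)) / b ^ (2:ℕ) := by
    field_simp
  have n1 : a ^ (2:ℕ) + b ^ (2:ℕ) ≠ 0 := by
    intro h; exact k1 (by rw [r1, h, zero_div])
  have n2 : a ^ (2:ℕ) * b ^ (2:ℕ) + 1 ≠ 0 := by
    intro h; exact k2 (by rw [r2, h, zero_div])
  have n3 : 1 + a ^ (2:ℕ) * b ^ (2:ℕ) ≠ 0 := k3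
  have n4 : b ^ (2:ℕ) + a ^ (2:ℕ) ≠ 0 := by
    intro h; exact k4 (by rw [r4, h, zero_div])
  have n5 : b ^ (2:ℕ) + 1 ≠ 0 := by
    intro h; apply hd2
    have : b⁻¹ = -b := by
      field_simp; linear_combination h
    rw [this]; ring
  have s1 : a * b⁻¹ + a⁻¹ * b = (a ^ (2:ℕ) + b ^ (2:ℕ)) / (a * b) := by
    field_simp
  have s2 : b + b⁻¹ = (b ^ (2:ℕ) + 1) / b := by field_simp
  have s3 : a * b + a⁻¹ * b⁻¹ = (a ^ (2:ℕ) * b ^ (2:ℕ) + 1) / (a * b) := by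
    field_simp
  have s4 : a - a⁻¹ = (a ^ (2:ℕ) - 1) / a := by field_simp
  have s5 : b ^ (2:ℕ) - (b ^ (2:ℕ))⁻¹ = (b ^ (4:ℕ) - 1) / b ^ (2:ℕ) := by
    field_simp
  rw [r1, r2, r4, s1, s2, s3, s4, s5]
  have t1 : a⁻¹ * b / ((a ^ (2:ℕ) + b ^ (2:ℕ)) / a ^ (2:ℕ))
      = a * b / (a ^ (2:ℕ) + b ^ (2:ℕ)) := by
    rw [div_div_eq_mul_div, div_eq_div_iff n1 n1]; field_simp
  have t2 : -(a⁻¹ * b⁻¹) / ((a ^ (2:ℕ) * b ^ (2:ℕ) + 1) / (a ^ (2:ℕ) * b ^ (2:ℕ)))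
      = -(a * b) / (a ^ (2:ℕ) * b ^ (2:ℕ) + 1) := by
    rw [div_div_eq_mul_div, div_eq_div_iff n2 n2]; field_simp
  have t4 : a * b⁻¹ / ((b ^ (2:ℕ) + a ^ (2:ℕ)) / b ^ (2:ℕ))
      = a * b / (b ^ (2:ℕ) + a ^ (2:ℕ)) := by
    rw [div_div_eq_mul_div, div_eq_div_iff n4 n4]; field_simp
  have hR : (a ^ (2:ℕ) - 1) / a * ((b ^ (4:ℕ) - 1) / b ^ (2:ℕ)) /
        ((a ^ (2:ℕ) + b ^ (2:ℕ)) / (a * b) * ((b ^ (2:ℕ) + 1) / b) *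
          ((a ^ (2:ℕ) * b ^ (2:ℕ) + 1) / (a * b)))
      = a * b * (a ^ (2:ℕ) - 1) * (b ^ (2:ℕ) - 1) /
          ((a ^ (2:ℕ) + b ^ (2:ℕ)) * (a ^ (2:ℕ) * b ^ (2:ℕ) + 1)) := by
    rw [div_eq_div_iff (by
        exact mul_ne_zero (mul_ne_zero
          (div_ne_zero n1 (mul_ne_zero ha hb)) (div_ne_zero n5 hb))
          (div_ne_zero n2 (mul_ne_zero ha hb)))
      (mul_ne_zero n1 n2)]
    field_simp
    ring
  rw [t1, t2, t4, hR]
  field_simp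
  ring
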